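/- Let g : ℝⁿ → ℝ be Lipschitz continuous with constant L, and let x_k → x*, y_k = x_k + t_k α_k d_k with t_k ∈ (0,1), ‖d_k‖ = 1, where g(x_k) < 0, g(y_k) < 0 for all k, and α_k ≤ c·g(x_k)² for a constant c > 0. If additionally −g(x_k) ≥ −g(y_k), then limsup_k (−g(x_k))/(−g(y_k)) ≤ 1; more precisely, −g(y_k) ≥ −g(x_k) − L t_k α_k ≥ −g(x_k) − L c g(x_k)², and hence if g(x_k) → 0 then (−g(x_k))/(−g(y_k)) → 1. -/
import Mathlib


open Filter

theorem stmt_14 (n : ℕ) (g : EuclideanSpace ℝ (Fin n) → ℝ) (L c : ℝ)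
    (hL : 0 ≤ L) (hc : 0 < c)
    (hlip : LipschitzWith (Real.toNNReal L) g)
    (x y d : ℕ → EuclideanSpace ℝ (Fin n)) (t α : ℕ → ℝ)
    (xstar : EuclideanSpace ℝ (Fin n))
    (hconv : Tendsto x atTop (nhds xstar))
    (ht : ∀ k, t k ∈ Set.Ioo (0 : ℝ) 1)
    (hd : ∀ k, ‖d k‖ = 1)
    (hy : ∀ k, y k = x k + (t k * α k) • d k)
    (hgx : ∀ k, g (x k) < 0) (hgy : ∀ k, g (y k) < 0)
    (hα : ∀ k, 0 < α k) (hαbound : ∀ k, α k ≤ c * g (x k) ^ 2)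
    (hord : ∀ k, -g (y k) ≤ -g (x k))
    (hgx0 : Tendsto (fun k => g (x k)) atTop (nhds 0)) :
    (∀ k, -g (x k) - L * (t k * α k) ≤ -g (y k)) ∧
    Tendsto (fun k => (-g (x k)) / (-g (y k))) atTop (nhds 1) := by
  have key : ∀ k, -g (x k) - L * (t k * α k) ≤ -g (y k) := by
    intro k
    have h1 : dist (g (y k)) (g (x k)) ≤ L * dist (y k) (x k) := by
      have := hlip.dist_le_mul (y k) (x k)
      rwa [Real.coe_toNNReal L hL] at this
    have hdist : dist (y k) (x k) = t k * α k := by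
      rw [hy k, dist_eq_norm]
      simp [norm_smul, hd k, abs_of_pos (ht k).1, abs_of_pos (hα k)]
    rw [hdist, Real.dist_eq] at h1
    have h2 := abs_sub_le_iff.mp h1
    linarith [h2.1, h2.2]
  refine ⟨key, ?_⟩
  have ha : ∀ k, 0 < -g (x k) := fun k => by linarith [hgx k]
  have hb : ∀ k, 0 < -g (y k) := fun k => by linarith [hgy k]
  have hsq : Tendsto (fun k => 1 - L * c * (-g (x k))) atTop (nhds 1) := by
    have h0 : Tendsto (fun k => L * c * (-g (x k))) atTop (nhds 0) := by
      simpa using (hgx0.neg.const_mul (L * c))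
    simpa using (tendsto_const_nhds.sub h0)
  have hratio : Tendsto (fun k => (-g (y k)) / (-g (x k))) atTop (nhds 1) := by
    refine tendsto_of_tendsto_of_tendsto_of_le_of_le hsq tendsto_const_nhds
      (fun k => ?_) (fun k => ?_)
    · rw [le_div_iff₀ (ha k)]
      have h1 := key k
      have h2 : L * (t k * α k) ≤ L * (c * g (x k) ^ 2) := by
        have ht1 := (ht k).1
        have ht2 := (ht k).2
        have hαk := hα k
        have hab := hαbound k
        have : t k * α k ≤ c * g (x k) ^ 2 := by nlinarith
        exact mul_le_mul_of_nonneg_left this hL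
      have h3 : L * c * (-g (x k)) * (-g (x k)) = L * (c * g (x k) ^ 2) := by ring
      nlinarith
    · rw [div_le_one (ha k)]
      exact hord k
  have hinv : Tendsto (fun k => ((-g (y k)) / (-g (x k)))⁻¹) atTop (nhds 1⁻¹) :=
    hratio.inv₀ one_ne_zero
  simpa [inv_div] using hinv
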